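/- arXiv:2105.06561 — 2 statements merged into one kernel-verified Lean document; each statement's English description precedes it below -/
import Mathlib

section
/- In a Schelling game on a cycle G with |T1| ≥ 2 and |T2| ≥ 2, every swap-equilibrium v has edge-robustness zero: there exists a single edge e of G such that v is not a swap-equilibrium on G − {e}. -/
open SimpleGraph

variable {V : Type*}

/-- Utility of the agent occupying vertex `v` in graph `H` under type assignment `τ`:
the fraction of same-type agents among occupied neighbors (0 if no neighbors). -/
noncomputable def utility (H : SimpleGraph V) (τ : V → Bool) (v : V) : ℚ := by
  classical
  exact if H.neighborSet v = ∅ then 0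
    else ((H.neighborSet v ∩ {w | τ w = τ v}).ncard : ℚ) / ((H.neighborSet v).ncard : ℚ)

/-- The type function after the agents on vertices `i` and `j` exchange their vertices. -/
noncomputable def swapAt (τ : V → Bool) (i j : V) : V → Bool := fun v => by
  classical
  exact if v = i then τ j else if v = j then τ i else τ v

/-- The swap of the (distinct-type) agents on `i` and `j` strictly increases both utilities. -/
def ProfitableSwap (H : SimpleGraph V) (τ : V → Bool) (i j : V) : Prop :=
  τ i ≠ τ j ∧
  utility H τ i < utility H (swapAt τ i j) j ∧
  utility H τ j < utility H (swapAt τ i j) i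

/-- Swap-equilibrium: no profitable swap exists. -/
def IsSwapEq (H : SimpleGraph V) (τ : V → Bool) : Prop :=
  ∀ i j : V, ¬ ProfitableSwap H τ i j

/-- The cycle graph on `Fin n` (vertices `0,…,n-1` in cyclic order). -/
def cycleG (n : ℕ) : SimpleGraph (Fin n) where
  Adj u v := u ≠ v ∧ ((u.val + 1) % n = v.val ∨ (v.val + 1) % n = u.val)
  symm := ⟨fun u v h => ⟨h.1.symm, h.2.symm⟩⟩
  loopless := ⟨fun u h => h.1 rfl⟩

open scoped Fin.CommRing Fin.NatCast Fin.IntCast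

section Helpers

lemma bool_eq' {s x y : Bool} (hx : x ≠ s) (hy : y ≠ s) : x = y := by
  cases s <;> cases x <;> cases y <;> simp_all

variable {n : ℕ} [NeZero n]

lemma my_one_ne_zero (hn : 2 ≤ n) : (1 : Fin n) ≠ 0 := by
  intro h
  have := congrArg Fin.val h
  rw [Fin.val_one'] at this
  simp at this
  omega

lemma my_two_ne_zero (hn : 3 ≤ n) : (2 : Fin n) ≠ 0 := by
  intro h
  rw [show (2 : Fin n) = ((2:ℕ) : Fin n) by norm_cast, Fin.natCast_eq_zero] at h
  have := Nat.le_of_dvd (by norm_num) h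
  omega

lemma cycle_adj (hn : 2 ≤ n) (u v : Fin n) :
    (cycleG n).Adj u v ↔ u ≠ v ∧ (u + 1 = v ∨ v + 1 = u) := by
  have h1 : ∀ w x : Fin n, (w.val + 1) % n = x.val ↔ w + 1 = x := by
    intro w x
    have hone : (1 : Fin n).val = 1 := by
      rw [Fin.val_one']; exact Nat.mod_eq_of_lt (by omega)
    rw [Fin.ext_iff, Fin.add_def]
    simp [hone]
  exact and_congr Iff.rfl (or_congr (h1 u v) (h1 v u))

lemma cycle_nbhd (hn : 3 ≤ n) (v : Fin n) :
    (cycleG n).neighborSet v = {v - 1, v + 1} := by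
  have h1 : (1 : Fin n) ≠ 0 := my_one_ne_zero (by omega)
  ext u
  rw [SimpleGraph.mem_neighborSet, cycle_adj (by omega)]
  simp only [Set.mem_insert_iff, Set.mem_singleton_iff]
  constructor
  · rintro ⟨hne, h | h⟩
    · right; exact h.symm
    · left; exact eq_sub_of_add_eq h
  · rintro (rfl | rfl)
    · refine ⟨fun h => h1 ?_, Or.inr (by ring)⟩
      have : v - (v - 1) = 0 := by rw [← h]; ring
      rw [show v - (v-1) = 1 by ring] at this; exact this
    · exact ⟨fun h => h1 (by rw [show (1:Fin n) = (v+1) - v by ring, ← h]; ring), Or.inl rfl⟩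

lemma run_lemma (τ : Fin n → Bool) (c : Fin n)
    (hex : ∃ j : ℕ, τ (c + ↑(j+1)) ≠ τ c) :
    ∃ k : ℕ, τ (c + ↑(k+1)) ≠ τ c ∧ (∀ j ≤ k, τ (c + ↑j) = τ c) ∧
      (∀ m : ℕ, τ (c + ↑(m+1)) ≠ τ c → k ≤ m) := by
  classical
  refine ⟨Nat.find hex, Nat.find_spec hex, ?_, fun m hm => Nat.find_min' hex hm⟩
  intro j hj
  match j with
  | 0 => simp
  | j' + 1 =>
    have := Nat.find_min hex (m := j') (by omega)
    exact not_ne_iff.mp this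
end Helpers

section Utility
variable {V : Type*}

lemma utility_pair {H : SimpleGraph V} {τ : V → Bool} {v x y : V} (hxy : x ≠ y)
    (h : H.neighborSet v = {x, y}) :
    utility H τ v =
      ((if τ x = τ v then 1 else 0) + (if τ y = τ v then 1 else 0) : ℚ) / 2 := by
  classical
  have hne : ({x, y} : Set V) ≠ ∅ := (Set.insert_nonempty x {y}).ne_empty
  have hcard : ({x, y} : Set V).ncard = 2 := Set.ncard_pair hxy
  rw [utility]
  rw [if_neg (by rw [h]; exact hne), h, hcard]
  by_cases hx : τ x = τ v <;> by_cases hy : τ y = τ v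
  · have : ({x, y} : Set V) ∩ {w | τ w = τ v} = {x, y} := by
      apply Set.inter_eq_left.mpr
      rintro w (rfl | rfl) <;> simpa
    rw [this, hcard, if_pos hx, if_pos hy]; norm_num
  · have : ({x, y} : Set V) ∩ {w | τ w = τ v} = {x} := by
      ext w
      simp only [Set.mem_inter_iff, Set.mem_insert_iff, Set.mem_singleton_iff, Set.mem_setOf_eq]
      constructor
      · rintro ⟨rfl | rfl, h2⟩
        · rfl
        · exact absurd h2 hy
      · rintro rfl; exact ⟨Or.inl rfl, hx⟩
    rw [this, Set.ncard_singleton, if_pos hx, if_neg hy]; norm_num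
  · have : ({x, y} : Set V) ∩ {w | τ w = τ v} = {y} := by
      ext w
      simp only [Set.mem_inter_iff, Set.mem_insert_iff, Set.mem_singleton_iff, Set.mem_setOf_eq]
      constructor
      · rintro ⟨rfl | rfl, h2⟩
        · exact absurd h2 hx
        · rfl
      · rintro rfl; exact ⟨Or.inr rfl, hy⟩
    rw [this, Set.ncard_singleton, if_neg hx, if_pos hy]; norm_num
  · have : ({x, y} : Set V) ∩ {w | τ w = τ v} = ∅ := by
      ext w
      simp only [Set.mem_inter_iff, Set.mem_insert_iff, Set.mem_singleton_iff, Set.mem_setOf_eq,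
        Set.mem_empty_iff_false, iff_false, not_and]
      rintro (rfl | rfl) <;> assumption
    rw [this, Set.ncard_empty, if_neg hx, if_neg hy]; norm_num

lemma utility_single {H : SimpleGraph V} {τ : V → Bool} {v x : V}
    (h : H.neighborSet v = {x}) :
    utility H τ v = if τ x = τ v then 1 else 0 := by
  classical
  rw [utility, if_neg (by rw [h]; exact (Set.singleton_nonempty x).ne_empty), h,
    Set.ncard_singleton]
  by_cases hx : τ x = τ v
  · have : ({x} : Set V) ∩ {w | τ w = τ v} = {x} := by
      apply Set.inter_eq_left.mpr; rintro w rfl; simpa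
    rw [this, Set.ncard_singleton, if_pos hx]; norm_num
  · have : ({x} : Set V) ∩ {w | τ w = τ v} = ∅ := by
      ext w
      simp only [Set.mem_inter_iff, Set.mem_singleton_iff, Set.mem_setOf_eq,
        Set.mem_empty_iff_false, iff_false, not_and]
      rintro rfl; exact hx
    rw [this, Set.ncard_empty, if_neg hx]; norm_num

lemma delete_nbhd_other {G : SimpleGraph V} {a b v : V} (hva : v ≠ a) (hvb : v ≠ b) :
    (G.deleteEdges {s(a,b)}).neighborSet v = G.neighborSet v := by
  ext u
  simp only [SimpleGraph.mem_neighborSet, SimpleGraph.deleteEdges_adj,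
    Set.mem_singleton_iff, Sym2.eq_iff]
  constructor
  · exact fun h => h.1
  · exact fun h => ⟨h, by rintro (⟨rfl, rfl⟩ | ⟨rfl, rfl⟩) <;> simp_all⟩

lemma swapAt_fst (τ : V → Bool) (i j : V) : swapAt τ i j i = τ j := by
  simp [swapAt]

lemma swapAt_snd {τ : V → Bool} {i j : V} (h : j ≠ i) : swapAt τ i j j = τ i := by
  simp [swapAt, h]

lemma swapAt_other {τ : V → Bool} {i j v : V} (h1 : v ≠ i) (h2 : v ≠ j) :
    swapAt τ i j v = τ v := by
  simp [swapAt, h1, h2]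
end Utility

lemma no_isolated {n : ℕ} [NeZero n] (hn : 4 ≤ n) (τ : Fin n → Bool)
    (h1 : 2 ≤ {v : Fin n | τ v = true}.ncard)
    (h2 : 2 ≤ {v : Fin n | τ v = false}.ncard)
    (heq : IsSwapEq (cycleG n) τ) (v : Fin n) :
    τ (v - 1) = τ v ∨ τ (v + 1) = τ v := by
  classical
  by_contra hcon
  push_neg at hcon
  obtain ⟨hL, hR⟩ := hcon
  have h1' : (1 : Fin n) ≠ 0 := my_one_ne_zero (by omega)
  have h2' : (2 : Fin n) ≠ 0 := my_two_ne_zero (by omega)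
  have hn3 : 3 ≤ n := by omega
  have d1 : v - 1 ≠ v + 1 := fun h => h2' (by linear_combination -h)
  have dv1 : v + 1 ≠ v := fun h => h1' (by linear_combination h)
  have dm1 : v - 1 ≠ v := fun h => h1' (by linear_combination -h)
  have nb1 : (cycleG n).neighborSet v = {v - 1, v + 1} := cycle_nbhd hn3 v
  have uv0 : utility (cycleG n) τ v = 0 := by
    rw [utility_pair d1 nb1, if_neg hL, if_neg hR]; norm_num
  by_cases hA : τ (v + 2) = τ v
  · -- swap v and v+1
    apply heq v (v + 1)
    have d2 : v ≠ v + 2 := fun h => h2' (by linear_combination -h)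
    have dv2 : v + 2 ≠ v + 1 := fun h => h1' (by linear_combination h)
    have dv3 : v + 2 ≠ v := fun h => h2' (by linear_combination h)
    have nb2 : (cycleG n).neighborSet (v+1) = {v, v + 2} := by
      rw [cycle_nbhd hn3, show v + 1 - 1 = v by ring, show v + 1 + 1 = v + 2 by ring]
    have s_v : swapAt τ v (v+1) v = τ (v+1) := swapAt_fst τ v (v+1)
    have s_v1 : swapAt τ v (v+1) (v+1) = τ v := swapAt_snd dv1
    have s_v2 : swapAt τ v (v+1) (v+2) = τ (v+2) := swapAt_other dv3 dv2
    have s_m1 : swapAt τ v (v+1) (v-1) = τ (v-1) := swapAt_other dm1 d1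
    refine ⟨fun h => hR h.symm, ?_, ?_⟩
    · have c1 : ¬ (τ (v+1) = τ v) := fun h => hR h
      rw [uv0, utility_pair d2 nb2, s_v, s_v1, s_v2, if_neg c1, if_pos hA]
      norm_num
    · have c1 : ¬ (τ v = τ (v+1)) := fun h => hR h.symm
      have c2 : ¬ (τ (v+2) = τ (v+1)) := fun h => hR (h.symm.trans hA)
      have c3 : τ (v-1) = τ (v+1) := bool_eq' hL hR
      rw [utility_pair d2 nb2, utility_pair d1 nb1, s_v, s_v1, s_m1,
        if_neg c1, if_neg c2, if_pos c3]
      norm_num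
  · by_cases hB : τ (v - 2) = τ v
    · -- swap v and v-1
      apply heq v (v - 1)
      have d2 : v - 2 ≠ v := fun h => h2' (by linear_combination -h)
      have d3 : v - 2 ≠ v - 1 := fun h => h1' (by linear_combination -h)
      have d4 : v + 1 ≠ v - 1 := fun h => h2' (by linear_combination h)
      have nb2 : (cycleG n).neighborSet (v-1) = {v - 2, v} := by
        rw [cycle_nbhd hn3, show v - 1 - 1 = v - 2 by ring, show v - 1 + 1 = v by ring]
      have s_v : swapAt τ v (v-1) v = τ (v-1) := swapAt_fst τ v (v-1)
      have s_m1 : swapAt τ v (v-1) (v-1) = τ v := swapAt_snd dm1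
      have s_m2 : swapAt τ v (v-1) (v-2) = τ (v-2) := swapAt_other d2 d3
      have s_p1 : swapAt τ v (v-1) (v+1) = τ (v+1) := swapAt_other dv1 d4
      refine ⟨fun h => hL h.symm, ?_, ?_⟩
      · have c1 : ¬ (τ (v-1) = τ v) := hL
        rw [uv0, utility_pair d2 nb2, s_m1, s_v, s_m2, if_pos hB, if_neg c1]
        norm_num
      · have c1 : ¬ (τ (v-2) = τ (v-1)) := fun h => hL (h.symm.trans hB)
        have c2 : ¬ (τ v = τ (v-1)) := fun h => hL h.symm
        have c3 : τ (v+1) = τ (v-1) := bool_eq' hR hL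
        rw [utility_pair d2 nb2, utility_pair d1 nb1, s_v, s_m1, s_p1,
          if_neg c1, if_neg c2, if_pos c3]
        norm_num
    · -- both v+2 and v-2 differ from τ v
      have hcard : 2 ≤ {w : Fin n | τ w = τ v}.ncard := by
        cases hv : τ v
        · simpa [hv] using h2
        · simpa [hv] using h1
      obtain ⟨u, hu, hune⟩ :=
        Set.exists_ne_of_one_lt_ncard (s := {w : Fin n | τ w = τ v}) (by omega) v
      simp only [Set.mem_setOf_eq] at hu
      have hdv : v + 1 - u ≠ 0 := by
        intro h
        have huv : u = v + 1 := by linear_combination -h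
        exact hR (huv ▸ hu)
      have hex : ∃ j : ℕ, τ (u + ↑(j+1)) ≠ τ u := by
        refine ⟨(v + 1 - u).val - 1, ?_⟩
        have hval : (v + 1 - u).val ≠ 0 := by
          intro h; exact hdv (Fin.val_injective (by simpa using h))
        have hcast : ((((v+1-u).val - 1) + 1 : ℕ) : Fin n) = v + 1 - u := by
          rw [Nat.sub_add_cancel (by omega)]
          exact Fin.cast_val_eq_self _
        rw [hcast, hu, show u + (v + 1 - u) = v + 1 by ring]
        exact hR
      obtain ⟨k, hk, hrun, hmin⟩ := run_lemma τ u hex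
      have hpτ : τ (u + (k : Fin n)) = τ v := by rw [← hu]; exact hrun k le_rfl
      have hp1 : τ (u + (k : Fin n) + 1) ≠ τ v := by
        rw [show u + (k : Fin n) + 1 = u + ((k+1 : ℕ) : Fin n) by push_cast; ring, ← hu]
        exact hk
      have hpv : u + (k : Fin n) ≠ v := by
        rcases Nat.eq_zero_or_pos k with hk0 | hkpos
        · rw [hk0]; simpa using hune
        · intro hpe
          have hc1 : ((k-1:ℕ) : Fin n) + 1 = (k : Fin n) := by
            have h' : ((k-1)+1 : ℕ) = k := Nat.sub_add_cancel hkpos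
            calc ((k-1:ℕ) : Fin n) + 1 = (((k-1)+1 : ℕ) : Fin n) := by push_cast; ring
              _ = (k : Fin n) := by rw [h']
          have he : u + ((k-1:ℕ) : Fin n) = v - 1 := by linear_combination hpe + hc1
          exact hL (by rw [← he, hrun (k-1) (by omega)]; exact hu)
      -- w := u + k + 1 : non-adjacent swap partner
      have hwv : u + (k:Fin n) + 1 ≠ v := by
        intro h
        have hvm : u + (k:Fin n) = v - 1 := by linear_combination h
        exact hL (by rw [← hvm]; exact hpτ)
      have hwv1 : u + (k:Fin n) + 1 ≠ v + 1 := by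
        intro h; exact hpv (by linear_combination h)
      have hwm1 : u + (k:Fin n) + 1 ≠ v - 1 := by
        intro h
        have hvm : u + (k:Fin n) = v - 2 := by linear_combination h
        exact hB (by rw [← hvm]; exact hpτ)
      have hpw : u + (k:Fin n) ≠ u + (k:Fin n) + 1 := fun h => h1' (by linear_combination -h)
      have hw1v : u + (k:Fin n) + 1 + 1 ≠ v := by
        intro h
        have hvm : u + (k:Fin n) = v - 2 := by linear_combination h
        exact hB (by rw [← hvm]; exact hpτ)
      have hw1w : u + (k:Fin n) + 1 + 1 ≠ u + (k:Fin n) + 1 :=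
        fun h => h1' (by linear_combination h)
      apply heq v (u + (k:Fin n) + 1)
      have nbw : (cycleG n).neighborSet (u + (k:Fin n) + 1) =
          {u + (k:Fin n), u + (k:Fin n) + 1 + 1} := by
        rw [cycle_nbhd hn3, show u + (k:Fin n) + 1 - 1 = u + (k:Fin n) by ring]
      have dpw1 : u + (k:Fin n) ≠ u + (k:Fin n) + 1 + 1 := fun h => h2' (by linear_combination -h)
      have s_w : swapAt τ v (u + (k:Fin n) + 1) (u + (k:Fin n) + 1) = τ v := swapAt_snd hwv
      have s_p : swapAt τ v (u + (k:Fin n) + 1) (u + (k:Fin n)) = τ (u + (k:Fin n)) :=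
        swapAt_other hpv hpw
      have s_w1 : swapAt τ v (u + (k:Fin n) + 1) (u + (k:Fin n) + 1 + 1) =
          τ (u + (k:Fin n) + 1 + 1) := swapAt_other hw1v hw1w
      have s_v : swapAt τ v (u + (k:Fin n) + 1) v = τ (u + (k:Fin n) + 1) := swapAt_fst _ _ _
      have s_vm : swapAt τ v (u + (k:Fin n) + 1) (v - 1) = τ (v - 1) :=
        swapAt_other dm1 (fun h => hwm1 h.symm)
      have s_vp : swapAt τ v (u + (k:Fin n) + 1) (v + 1) = τ (v + 1) :=
        swapAt_other dv1 (fun h => hwv1 h.symm)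
      refine ⟨fun h => hp1 h.symm, ?_, ?_⟩
      · rw [uv0, utility_pair dpw1 nbw, s_p, s_w, s_w1, if_pos hpτ]
        split_ifs <;> norm_num
      · have c1 : ¬ (τ (u + (k:Fin n)) = τ (u + (k:Fin n) + 1)) :=
          fun h => hp1 (h.symm.trans hpτ)
        have c2 : τ (v-1) = τ (u + (k:Fin n) + 1) := bool_eq' hL hp1
        have c3 : τ (v+1) = τ (u + (k:Fin n) + 1) := bool_eq' hR hp1
        rw [utility_pair dpw1 nbw, utility_pair d1 nb1, s_v, s_vm, s_vp,
          if_neg c1, if_pos c2, if_pos c3]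
        split_ifs <;> norm_num

/-- On a cycle with at least two agents of each type, every swap-equilibrium has
edge-robustness zero: some single edge deletion makes it unstable. -/
theorem cycle_edge_robustness_zero (n : ℕ) (τ : Fin n → Bool)
    (h1 : 2 ≤ {v : Fin n | τ v = true}.ncard)
    (h2 : 2 ≤ {v : Fin n | τ v = false}.ncard)
    (heq : IsSwapEq (cycleG n) τ) :
    ∃ e ∈ (cycleG n).edgeSet, ¬ IsSwapEq ((cycleG n).deleteEdges {e}) τ := by
  classical
  have hd : {v : Fin n | τ v = false} = {v : Fin n | τ v = true}ᶜ := by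
    ext w; simp
  have hcompl := Set.ncard_add_ncard_compl {v : Fin n | τ v = true}
  rw [Nat.card_eq_fintype_card, Fintype.card_fin] at hcompl
  have h2c : 2 ≤ ({v : Fin n | τ v = true}ᶜ).ncard := hd ▸ h2
  have hn : 4 ≤ n := by omega
  haveI : NeZero n := ⟨by omega⟩
  have hn3 : 3 ≤ n := by omega
  have h1' : (1 : Fin n) ≠ 0 := my_one_ne_zero (by omega)
  have h2' : (2 : Fin n) ≠ 0 := my_two_ne_zero (by omega)
  have hno := no_isolated hn τ h1 h2 heq
  have hbex : ∃ b : Fin n, τ b ≠ τ (b + 1) := by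
    by_contra hcon
    push_neg at hcon
    have hconst : ∀ m : ℕ, τ (↑m) = τ (0 : Fin n) := by
      intro m
      induction m with
      | zero => norm_num
      | succ m ih =>
        rw [show ((m+1:ℕ) : Fin n) = ↑m + 1 by push_cast; ring, ← hcon (↑m), ih]
    have hall : ∀ w : Fin n, τ w = τ (0 : Fin n) := fun w => by
      conv_lhs => rw [← Fin.cast_val_eq_self w]
      exact hconst w.val
    cases h0 : τ (0 : Fin n)
    · have he : {v : Fin n | τ v = true} = ∅ := by
        ext w; simp [hall w, h0]
      rw [he, Set.ncard_empty] at h1; omega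
    · have he : {v : Fin n | τ v = false} = ∅ := by
        ext w; simp [hall w, h0]
      rw [he, Set.ncard_empty] at h2; omega
  obtain ⟨b, hbc⟩ := hbex
  have hab : τ (b - 1) = τ b := (hno b).resolve_right (fun h => hbc h.symm)
  have hc1 : τ (b + 1 + 1) = τ (b + 1) := by
    refine (hno (b+1)).resolve_left ?_
    rw [show b + 1 - 1 = b by ring]
    exact hbc
  have hnn : ((n - 1 : ℕ) : Fin n) = -1 := by
    have h0 : ((n : ℕ) : Fin n) = 0 := Fin.natCast_self n
    have hh : ((n - 1 : ℕ) : Fin n) + 1 = 0 := by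
      have h' : ((n-1)+1 : ℕ) = n := Nat.sub_add_cancel (by omega)
      calc ((n-1:ℕ) : Fin n) + 1 = (((n-1)+1 : ℕ) : Fin n) := by push_cast; ring
        _ = ((n:ℕ) : Fin n) := by rw [h']
        _ = 0 := h0
    linear_combination hh
  have hex : ∃ j : ℕ, τ (b + 1 + ↑(j+1)) ≠ τ (b + 1) := by
    refine ⟨n - 2, ?_⟩
    rw [show (n-2)+1 = n-1 by omega, hnn, show b + 1 + (-1 : Fin n) = b by ring]
    exact hbc
  obtain ⟨k, hk, hrun, hmin⟩ := run_lemma τ (b+1) hex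
  have hkle : k ≤ n - 2 := by
    apply hmin
    rw [show (n-2)+1 = n-1 by omega, hnn, show b + 1 + (-1 : Fin n) = b by ring]
    exact hbc
  have hk1 : 1 ≤ k := by
    rcases Nat.eq_zero_or_pos k with h | h
    · exfalso
      apply hk
      rw [h, show ((0+1 : ℕ) : Fin n) = 1 by norm_num]
      exact hc1
    · exact h
  have hz : τ (b + 1 + (k : Fin n)) = τ (b + 1) := hrun k le_rfl
  have hy : τ (b + 1 + (k : Fin n) + 1) ≠ τ (b + 1) := by
    rw [show b + 1 + (k:Fin n) + 1 = b + 1 + ((k+1:ℕ) : Fin n) by push_cast; ring]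
    exact hk
  have hkc1 : ((k-1:ℕ) : Fin n) + 1 = (k : Fin n) := by
    have h' : ((k-1)+1 : ℕ) = k := Nat.sub_add_cancel hk1
    calc ((k-1:ℕ) : Fin n) + 1 = (((k-1)+1 : ℕ) : Fin n) := by push_cast; ring
      _ = (k : Fin n) := by rw [h']
  have hz1 : τ (b + 1 + (k : Fin n) - 1) = τ (b + 1) := by
    rw [show b + 1 + (k:Fin n) - 1 = b + 1 + ((k-1:ℕ) : Fin n) by linear_combination -hkc1]
    exact hrun (k-1) (by omega)
  have hbeq : b = b + 1 + ((n-1 : ℕ) : Fin n) := by rw [hnn]; ring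
  have hyb : b + 1 + (k : Fin n) + 1 ≠ b := by
    intro h
    have hcast : ((k+1:ℕ) : Fin n) = ((n-1:ℕ) : Fin n) := by
      have e1 : b + 1 + ((k+1:ℕ):Fin n) = b := by push_cast; linear_combination h
      exact add_left_cancel (e1.trans hbeq)
    have hv := congrArg Fin.val hcast
    rw [Fin.val_natCast, Fin.val_natCast, Nat.mod_eq_of_lt (by omega),
      Nat.mod_eq_of_lt (by omega)] at hv
    have hsub : {w : Fin n | τ w = !(τ (b+1))} ⊆ {b} := by
      intro w hwmem
      simp only [Set.mem_setOf_eq] at hwmem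
      simp only [Set.mem_singleton_iff]
      by_contra hwb
      have hwj : w = b + 1 + ↑((w - (b+1)).val) := by
        rw [Fin.cast_val_eq_self]; ring
      have hjlt : (w - (b+1)).val < n := (w - (b+1)).isLt
      have hjne : (w - (b+1)).val ≠ n - 1 := by
        intro hh
        exact hwb (by rw [hwj, hh, ← hbeq])
      have hwc : τ w = τ (b+1) := by
        rw [hwj]; exact hrun _ (by omega)
      rw [hwc] at hwmem
      simp at hwmem
    have hle1 : {w : Fin n | τ w = !(τ (b+1))}.ncard ≤ 1 := by
      have := Set.ncard_le_ncard hsub (Set.finite_singleton b)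
      simpa using this
    cases hcc : τ (b+1)
    · rw [hcc] at hle1
      simp only [Bool.not_false] at hle1
      omega
    · rw [hcc] at hle1
      simp only [Bool.not_true] at hle1
      omega
  have hzb : b + 1 + (k:Fin n) ≠ b := by
    intro h; rw [h] at hz; exact hbc hz
  have hza : b + 1 + (k:Fin n) ≠ b - 1 := by
    intro h; rw [h] at hz; apply hbc; rw [← hab]; exact hz
  have hzc : b + 1 + (k:Fin n) ≠ b + 1 := by
    intro h
    have hk0 : (k : Fin n) = 0 := by linear_combination h
    rw [Fin.natCast_eq_zero] at hk0
    have := Nat.le_of_dvd (by omega) hk0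
    omega
  refine ⟨s(b - 1, b), ?_, ?_⟩
  · rw [SimpleGraph.mem_edgeSet, cycle_adj (show 2 ≤ n by omega)]
    refine ⟨fun h => h1' ?_, Or.inl (by ring)⟩
    first | linear_combination h | linear_combination -h
  · intro hs
    apply hs b (b + 1 + (k:Fin n))
    have nbb : ((cycleG n).deleteEdges {s(b-1,b)}).neighborSet b = {b+1} := by
      ext x
      simp only [SimpleGraph.mem_neighborSet, SimpleGraph.deleteEdges_adj,
        Set.mem_singleton_iff, Sym2.eq_iff]
      rw [cycle_adj (show 2 ≤ n by omega)]
      constructor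
      · rintro ⟨⟨hne, h | h⟩, hnot⟩
        · exact h.symm
        · exact absurd (Or.inr ⟨by trivial, eq_sub_of_add_eq h⟩) hnot
      · rintro rfl
        refine ⟨⟨fun h => h1' (by first | linear_combination h | linear_combination -h),
          Or.inl rfl⟩, ?_⟩
        rintro (⟨h, -⟩ | ⟨-, h⟩)
        · exact h1' (by first | linear_combination h | linear_combination -h)
        · exact h2' (by first | linear_combination h | linear_combination -h)
    have nbz : ((cycleG n).deleteEdges {s(b-1,b)}).neighborSet (b + 1 + (k:Fin n)) =
        {b + 1 + (k:Fin n) - 1, b + 1 + (k:Fin n) + 1} := by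
      rw [delete_nbhd_other hza hzb, cycle_nbhd hn3]
    have dz : b + 1 + (k:Fin n) - 1 ≠ b + 1 + (k:Fin n) + 1 :=
      fun h => h2' (by first | linear_combination h | linear_combination -h)
    have dzm1 : b + 1 + (k:Fin n) - 1 ≠ b := by
      intro h; exact hzc (by linear_combination h)
    have dzm2 : b + 1 + (k:Fin n) - 1 ≠ b + 1 + (k:Fin n) :=
      fun h => h1' (by first | linear_combination h | linear_combination -h)
    have dyz : b + 1 + (k:Fin n) + 1 ≠ b + 1 + (k:Fin n) :=
      fun h => h1' (by first | linear_combination h | linear_combination -h)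
    have dcb : b + 1 ≠ b :=
      fun h => h1' (by first | linear_combination h | linear_combination -h)
    have s_b : swapAt τ b (b + 1 + (k:Fin n)) b = τ (b + 1 + (k:Fin n)) := swapAt_fst _ _ _
    have s_z : swapAt τ b (b + 1 + (k:Fin n)) (b + 1 + (k:Fin n)) = τ b := swapAt_snd hzb
    have s_c : swapAt τ b (b + 1 + (k:Fin n)) (b + 1) = τ (b + 1) :=
      swapAt_other dcb (fun h => hzc h.symm)
    have s_zm : swapAt τ b (b + 1 + (k:Fin n)) (b + 1 + (k:Fin n) - 1) =
        τ (b + 1 + (k:Fin n) - 1) := swapAt_other dzm1 dzm2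
    have s_y : swapAt τ b (b + 1 + (k:Fin n)) (b + 1 + (k:Fin n) + 1) =
        τ (b + 1 + (k:Fin n) + 1) := swapAt_other hyb dyz
    refine ⟨fun h => hbc (h.trans hz), ?_, ?_⟩
    · have c1 : ¬ (τ (b+1) = τ b) := fun h => hbc h.symm
      have c2 : ¬ (τ (b + 1 + (k:Fin n) - 1) = τ b) := fun h => hbc (h.symm.trans hz1)
      have c3 : τ (b + 1 + (k:Fin n) + 1) = τ b := bool_eq' hy hbc
      rw [utility_single nbb, utility_pair dz nbz, s_zm, s_y, s_z,
        if_neg c1, if_neg c2, if_pos c3]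
      norm_num
    · have c4 : τ (b + 1 + (k:Fin n) - 1) = τ (b + 1 + (k:Fin n)) := hz1.trans hz.symm
      have c5 : ¬ (τ (b + 1 + (k:Fin n) + 1) = τ (b + 1 + (k:Fin n))) := fun h => hy (h.trans hz)
      have c6 : τ (b+1) = τ (b + 1 + (k:Fin n)) := hz.symm
      rw [utility_pair dz nbz, utility_single nbb, s_c, s_b,
        if_pos c4, if_neg c5, if_pos c6]
      norm_num
end

section
/- Let G be an α-star-constellation graph for some α ∈ ℕ₀ and let v be an assignment in a Schelling game on G satisfying: every degree-one vertex of G is occupied by an agent of the same type as the agent on its unique neighbor. Then v is a swap-equilibrium. -/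
open SimpleGraph

variable {V : Type*}

/-- Degree of a vertex (number of neighbors). -/
noncomputable def ndeg (H : SimpleGraph V) (v : V) : ℕ := (H.neighborSet v).ncard

/-- `G` is an `α`-star-constellation graph: connected, and every vertex of degree `> 1`
has at least `α` more degree-one neighbors than neighbors of degree `> 1`. -/
def IsStarConstellation (G : SimpleGraph V) (α : ℕ) : Prop :=
  G.Connected ∧ ∀ v : V, 1 < ndeg G v →
    {w ∈ G.neighborSet v | 1 < ndeg G w}.ncard + α ≤
      {w ∈ G.neighborSet v | ndeg G w = 1}.ncard

lemma neighbor_ndeg_pos [Fintype V] {G : SimpleGraph V} {v w : V} (h : G.Adj v w) :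
    0 < ndeg G w := by
  rw [ndeg, Set.ncard_pos (Set.toFinite _)]
  exact ⟨v, h.symm⟩

lemma ndeg_split [Fintype V] (G : SimpleGraph V) (v : V) :
    ndeg G v = {w ∈ G.neighborSet v | ndeg G w = 1}.ncard
      + {w ∈ G.neighborSet v | 1 < ndeg G w}.ncard := by
  rw [ndeg, ← Set.ncard_union_eq ?_ (Set.toFinite _) (Set.toFinite _)]
  · congr 1
    ext w
    simp only [Set.mem_union, Set.mem_sep_iff]
    constructor
    · intro hw
      have h1 : 0 < ndeg G w := neighbor_ndeg_pos hw
      rcases Nat.lt_or_ge 1 (ndeg G w) with h | h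
      · exact Or.inr ⟨hw, h⟩
      · exact Or.inl ⟨hw, le_antisymm h h1⟩
    · rintro (⟨h, _⟩ | ⟨h, _⟩) <;> exact h
  · rw [Set.disjoint_left]
    rintro w ⟨_, h1⟩ ⟨_, h2⟩
    omega

lemma utility_le_one [Fintype V] (H : SimpleGraph V) (τ : V → Bool) (v : V) :
    utility H τ v ≤ 1 := by
  rw [utility]
  split
  · norm_num
  · next h =>
    have hpos : 0 < ((H.neighborSet v).ncard : ℚ) := by
      exact_mod_cast (Set.ncard_pos (Set.toFinite _)).2 (Set.nonempty_iff_ne_empty.2 h)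
    rw [div_le_one hpos]
    exact_mod_cast Set.ncard_le_ncard Set.inter_subset_left (Set.toFinite _)

lemma utility_eq_one [Fintype V] (H : SimpleGraph V) (τ : V → Bool) (v : V)
    (hne : H.neighborSet v ≠ ∅) (h : ∀ w ∈ H.neighborSet v, τ w = τ v) :
    utility H τ v = 1 := by
  rw [utility, if_neg hne]
  have heq : H.neighborSet v ∩ {w | τ w = τ v} = H.neighborSet v :=
    Set.inter_eq_self_of_subset_left fun w hw => h w hw
  have hpos : ((H.neighborSet v).ncard : ℚ) ≠ 0 := by
    exact_mod_cast ((Set.ncard_pos (Set.toFinite _)).2 (Set.nonempty_iff_ne_empty.2 hne)).ne'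
  rw [heq, div_self hpos]

lemma neighborSet_ne_empty [Fintype V] {G : SimpleGraph V} {v : V} (h : 0 < ndeg G v) :
    G.neighborSet v ≠ ∅ := by
  rw [ndeg, Set.ncard_pos (Set.toFinite _)] at h
  exact Set.nonempty_iff_ne_empty.1 h

lemma utility_ge_half [Fintype V] {G : SimpleGraph V} {α : ℕ} {τ : V → Bool}
    (hG : IsStarConstellation G α)
    (hleaf : ∀ v : V, ndeg G v = 1 → ∀ w : V, G.Adj v w → τ w = τ v)
    {v : V} (hv : 1 < ndeg G v) : 1 / 2 ≤ utility G τ v := by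
  have hLB := hG.2 v hv
  have hsplit := ndeg_split G v
  have hLsub : {w ∈ G.neighborSet v | ndeg G w = 1} ⊆ G.neighborSet v ∩ {w | τ w = τ v} := by
    rintro w ⟨hw, hw1⟩
    exact ⟨hw, (hleaf w hw1 v ((mem_neighborSet G v w).1 hw).symm).symm⟩
  have hLle : {w ∈ G.neighborSet v | ndeg G w = 1}.ncard
      ≤ (G.neighborSet v ∩ {w | τ w = τ v}).ncard :=
    Set.ncard_le_ncard hLsub (Set.toFinite _)
  have hne : G.neighborSet v ≠ ∅ := neighborSet_ne_empty (by omega)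
  rw [utility, if_neg hne]
  have hpos : 0 < ((G.neighborSet v).ncard : ℚ) := by
    exact_mod_cast (Set.ncard_pos (Set.toFinite _)).2 (Set.nonempty_iff_ne_empty.2 hne)
  rw [le_div_iff₀ hpos]
  have hkey : (G.neighborSet v).ncard ≤ 2 * (G.neighborSet v ∩ {w | τ w = τ v}).ncard := by
    rw [← ndeg]
    omega
  have : ((G.neighborSet v).ncard : ℚ) ≤ 2 * ((G.neighborSet v ∩ {w | τ w = τ v}).ncard : ℚ) := by
    exact_mod_cast hkey
  linarith

lemma utility_swap_le_half [Fintype V] {G : SimpleGraph V} {α : ℕ} {τ : V → Bool}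
    (hG : IsStarConstellation G α)
    (hleaf : ∀ v : V, ndeg G v = 1 → ∀ w : V, G.Adj v w → τ w = τ v)
    {i j : V} (hi : 1 < ndeg G i) (hj : 1 < ndeg G j) (hij : τ i ≠ τ j) (hne : i ≠ j) :
    utility G (swapAt τ i j) j ≤ 1 / 2 := by
  set τ' := swapAt τ i j with hτ'
  have hτ'j : τ' j = τ i := by
    simp [hτ', swapAt, hne.symm]
  have hLB := hG.2 j hj
  have hsplit := ndeg_split G j
  have hsub : G.neighborSet j ∩ {w | τ' w = τ' j} ⊆ {w ∈ G.neighborSet j | 1 < ndeg G w} := by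
    rintro w ⟨hw, hwτ⟩
    have hwτ' : τ' w = τ' j := hwτ
    have hadj : G.Adj j w := (mem_neighborSet G j w).1 hw
    refine ⟨hw, ?_⟩
    by_contra hcon
    have hw1 : ndeg G w = 1 := by
      have := neighbor_ndeg_pos hadj
      omega
    have hwi : w ≠ i := by rintro rfl; omega
    have hwj : w ≠ j := by rintro rfl; exact G.irrefl hadj
    have heq : τ' w = τ w := by simp [hτ', swapAt, hwi, hwj]
    rw [heq, hτ'j] at hwτ'
    exact hij (((hleaf w hw1 j hadj.symm).trans hwτ').symm)
  have hle : (G.neighborSet j ∩ {w | τ' w = τ' j}).ncard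
      ≤ {w ∈ G.neighborSet j | 1 < ndeg G w}.ncard :=
    Set.ncard_le_ncard hsub (Set.toFinite _)
  have hnem : G.neighborSet j ≠ ∅ := neighborSet_ne_empty (by omega)
  rw [utility, if_neg hnem]
  have hpos : 0 < ((G.neighborSet j).ncard : ℚ) := by
    exact_mod_cast (Set.ncard_pos (Set.toFinite _)).2 (Set.nonempty_iff_ne_empty.2 hnem)
  rw [div_le_iff₀ hpos]
  have hkey : 2 * (G.neighborSet j ∩ {w | τ' w = τ' j}).ncard ≤ (G.neighborSet j).ncard := by
    rw [← ndeg]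
    omega
  have : 2 * ((G.neighborSet j ∩ {w | τ' w = τ' j}).ncard : ℚ)
      ≤ ((G.neighborSet j).ncard : ℚ) := by exact_mod_cast hkey
  linarith

/-- On an `α`-star-constellation graph, any assignment in which every degree-one vertex is
occupied by an agent of the same type as the agent on its unique neighbor is a
swap-equilibrium. -/
theorem starConstellation_swapEq_of_leaves_match [Fintype V] (G : SimpleGraph V) (α : ℕ)
    (τ : V → Bool) (hG : IsStarConstellation G α)
    (hleaf : ∀ v : V, ndeg G v = 1 → ∀ w : V, G.Adj v w → τ w = τ v) :
    IsSwapEq G τ := by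
  rintro i j ⟨hij, h1, h2⟩
  have hne : i ≠ j := fun h => hij (h ▸ rfl)
  -- every vertex has positive degree
  have hdegpos : ∀ u w : V, u ≠ w → 0 < ndeg G u := by
    intro u w huw
    obtain ⟨p⟩ := hG.1.preconnected u w
    cases p with
    | nil => exact absurd rfl huw
    | cons h _ => exact neighbor_ndeg_pos h.symm
  have hdi : 0 < ndeg G i := hdegpos i j hne
  have hdj : 0 < ndeg G j := hdegpos j i hne.symm
  rcases Nat.lt_or_ge 1 (ndeg G i) with hi | hi
  · rcases Nat.lt_or_ge 1 (ndeg G j) with hj | hj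
    · -- both degrees > 1
      have hlow := utility_ge_half hG hleaf hi
      have hup := utility_swap_le_half hG hleaf hi hj hij hne
      linarith
    · -- deg j = 1
      have hj1 : ndeg G j = 1 := le_antisymm hj hdj
      have : utility G τ j = 1 := by
        apply utility_eq_one _ _ _ (neighborSet_ne_empty hdj)
        intro w hw
        exact hleaf j hj1 w ((mem_neighborSet G j w).1 hw)
      have := utility_le_one G (swapAt τ i j) i
      linarith
  · -- deg i = 1
    have hi1 : ndeg G i = 1 := le_antisymm hi hdi
    have : utility G τ i = 1 := by
      apply utility_eq_one _ _ _ (neighborSet_ne_empty hdi)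
      intro w hw
      exact hleaf i hi1 w ((mem_neighborSet G i w).1 hw)
    have := utility_le_one G (swapAt τ i j) j
    linarith
end
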